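/- arXiv:1305.4595 — 3 statements merged into one kernel-verified Lean document; each statement's English description precedes it below -/
import Mathlib

section
/- There exist positive real numbers a, b, c, d, e, f such that the real number ad does not lie in the additive subgroup of ℝ generated by the six quantities ad−be, ad−cf, de+df+ef+ad, ab+af+bf+ad, ac+ae+ce+ad, and bc+bd+cd+ad. -/
theorem stmt_3 :
    ∃ a b c d e f : ℝ, 0 < a ∧ 0 < b ∧ 0 < c ∧ 0 < d ∧ 0 < e ∧ 0 < f ∧
      a*d ∉ AddSubgroup.closure ({a*d-b*e, a*d-c*f,
                          d*e+d*f+e*f+a*d,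
                          a*b+a*f+b*f+a*d,
                          a*c+a*e+c*e+a*d,
                          b*c+b*d+c*d+a*d} : Set ℝ) := by
  refine ⟨1, 1, 1, 1, 1, 1, one_pos, one_pos, one_pos, one_pos, one_pos, one_pos, ?_⟩
  intro h
  have hsub : ({(1:ℝ)*1-1*1, (1:ℝ)*1-1*1,
      (1:ℝ)*1+1*1+1*1+1*1, (1:ℝ)*1+1*1+1*1+1*1, (1:ℝ)*1+1*1+1*1+1*1,
      (1:ℝ)*1+1*1+1*1+1*1} : Set ℝ) ⊆ AddSubgroup.zmultiples (4:ℝ) := by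
    intro x hx
    simp only [Set.mem_insert_iff, Set.mem_singleton_iff] at hx
    rcases hx with h1 | h1 | h1 | h1 | h1 | h1 <;> subst h1
    · exact ⟨0, by norm_num⟩
    · exact ⟨0, by norm_num⟩
    · exact ⟨1, by norm_num⟩
    · exact ⟨1, by norm_num⟩
    · exact ⟨1, by norm_num⟩
    · exact ⟨1, by norm_num⟩
  have h2 : (1:ℝ)*1 ∈ AddSubgroup.zmultiples (4:ℝ) :=
    (AddSubgroup.closure_le _).2 hsub h
  obtain ⟨k, hk⟩ := h2
  simp only [zsmul_eq_mul] at hk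
  have h3 : ((4 * k : ℤ) : ℝ) = ((1 : ℤ) : ℝ) := by push_cast; linarith [hk]
  have h4 : (4 : ℤ) * k = 1 := by exact_mod_cast h3
  omega
end

section
/- For a generic choice of positive reals a, b, c, d, e, f (specifically, outside a countable union of proper affine subvarieties—equivalently for algebraically independent values), ad is not in the ℤ-span of the six 2×2 minors of the K₄ period matrix. -/
open MvPolynomial

/-- The six minor polynomials as elements of `MvPolynomial (Fin 6) ℚ`. -/
noncomputable def K4G : Fin 6 → MvPolynomial (Fin 6) ℚ
  | 0 => X 0*X 1+X 0*X 3+X 0*X 5+X 1*X 4+X 3*X 4+X 4*X 5+X 1*X 5+X 3*X 5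
  | 1 => X 0*X 3+X 3*X 4+X 3*X 5+X 4*X 5
  | 2 => X 0*X 2+X 0*X 3+X 0*X 4+X 2*X 4+X 3*X 4+X 2*X 5+X 3*X 5+X 4*X 5
  | 3 => X 1*X 4+X 3*X 4+X 3*X 5+X 4*X 5
  | 4 => X 1*X 2+X 1*X 3+X 1*X 4+X 2*X 3+X 3*X 4+X 2*X 5+X 3*X 5+X 4*X 5
  | 5 => X 2*X 5+X 3*X 5+X 4*X 5+X 3*X 4

theorem stmt_4 (x : Fin 6 → ℝ) (hx : AlgebraicIndependent ℚ x) :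
    ∀ a b c d e f : ℝ, a = x 0 → b = x 1 → c = x 2 → d = x 3 → e = x 4 → f = x 5 →
      a*d ∉ AddSubgroup.closure
        ({a*b+a*d+a*f+b*e+d*e+e*f+b*f+d*f,
          a*d+d*e+d*f+e*f,
          a*c+a*d+a*e+c*e+d*e+c*f+d*f+e*f,
          b*e+d*e+d*f+e*f,
          b*c+b*d+b*e+c*d+d*e+c*f+d*f+e*f,
          c*f+d*f+e*f+d*e} : Set ℝ) := by
  rintro a b c d e f rfl rfl rfl rfl rfl rfl h
  have hinj : Function.Injective (MvPolynomial.aeval (R := ℚ) x) := hx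
  set φ : MvPolynomial (Fin 6) ℚ →+ ℝ := (MvPolynomial.aeval (R := ℚ) x).toAddMonoidHom with hφ
  have e0 : φ (K4G 0) = x 0*x 1+x 0*x 3+x 0*x 5+x 1*x 4+x 3*x 4+x 4*x 5+x 1*x 5+x 3*x 5 := by
    simp [hφ, K4G]
  have e1 : φ (K4G 1) = x 0*x 3+x 3*x 4+x 3*x 5+x 4*x 5 := by simp [hφ, K4G]
  have e2 : φ (K4G 2) = x 0*x 2+x 0*x 3+x 0*x 4+x 2*x 4+x 3*x 4+x 2*x 5+x 3*x 5+x 4*x 5 := by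
    simp [hφ, K4G]
  have e3 : φ (K4G 3) = x 1*x 4+x 3*x 4+x 3*x 5+x 4*x 5 := by simp [hφ, K4G]
  have e4 : φ (K4G 4) = x 1*x 2+x 1*x 3+x 1*x 4+x 2*x 3+x 3*x 4+x 2*x 5+x 3*x 5+x 4*x 5 := by
    simp [hφ, K4G]
  have e5 : φ (K4G 5) = x 2*x 5+x 3*x 5+x 4*x 5+x 3*x 4 := by simp [hφ, K4G]
  have himg : ({x 0*x 1+x 0*x 3+x 0*x 5+x 1*x 4+x 3*x 4+x 4*x 5+x 1*x 5+x 3*x 5,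
          x 0*x 3+x 3*x 4+x 3*x 5+x 4*x 5,
          x 0*x 2+x 0*x 3+x 0*x 4+x 2*x 4+x 3*x 4+x 2*x 5+x 3*x 5+x 4*x 5,
          x 1*x 4+x 3*x 4+x 3*x 5+x 4*x 5,
          x 1*x 2+x 1*x 3+x 1*x 4+x 2*x 3+x 3*x 4+x 2*x 5+x 3*x 5+x 4*x 5,
          x 2*x 5+x 3*x 5+x 4*x 5+x 3*x 4} : Set ℝ) = φ '' (Set.range K4G) := by
    ext y
    simp only [Set.mem_insert_iff, Set.mem_singleton_iff, Set.image_univ, ← Set.range_comp,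
      Set.mem_range, Set.mem_image]
    constructor
    · rintro (rfl | rfl | rfl | rfl | rfl | rfl)
      · exact ⟨0, e0⟩
      · exact ⟨1, e1⟩
      · exact ⟨2, e2⟩
      · exact ⟨3, e3⟩
      · exact ⟨4, e4⟩
      · exact ⟨5, e5⟩
    · rintro ⟨i, rfl⟩
      simp only [Function.comp_apply]
      fin_cases i
      · rw [show φ (K4G ⟨0, by norm_num⟩) = _ from e0]; tauto
      · rw [show φ (K4G ⟨1, by norm_num⟩) = _ from e1]; tauto
      · rw [show φ (K4G ⟨2, by norm_num⟩) = _ from e2]; tauto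
      · rw [show φ (K4G ⟨3, by norm_num⟩) = _ from e3]; tauto
      · rw [show φ (K4G ⟨4, by norm_num⟩) = _ from e4]; tauto
      · rw [show φ (K4G ⟨5, by norm_num⟩) = _ from e5]; tauto
  rw [himg, ← AddMonoidHom.map_closure] at h
  obtain ⟨P, hP, hPx⟩ := h
  have hP' : P = X 0 * X 3 := by
    apply hinj
    rw [show (MvPolynomial.aeval (R := ℚ) x) P = φ P from rfl, hPx]
    simp [hφ]
  rw [hP'] at hP
  have hP2 : (X 0 * X 3 : MvPolynomial (Fin 6) ℚ) ∈ Submodule.span ℤ (Set.range K4G) := by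
    rw [← Submodule.mem_toAddSubgroup, Submodule.span_int_eq_addSubgroupClosure]
    exact hP
  rw [Submodule.mem_span_range_iff_exists_fun] at hP2
  obtain ⟨c, hc⟩ := hP2
  have key : ∀ v : Fin 6 → ℚ, (c 0 : ℚ) * eval v (K4G 0) + c 1 * eval v (K4G 1)
      + c 2 * eval v (K4G 2) + c 3 * eval v (K4G 3) + c 4 * eval v (K4G 4)
      + c 5 * eval v (K4G 5) = v 0 * v 3 := by
    intro v
    have := congrArg (MvPolynomial.eval v) hc
    rw [map_sum, Fin.sum_univ_six] at this
    simpa [zsmul_eq_mul] using this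
  have h1 := key ![1,0,0,1,0,0]
  have h2 := key ![1,1,0,0,0,0]
  have h3 := key ![1,0,1,0,0,0]
  have h4 := key ![0,1,1,0,0,0]
  have h5 := key ![0,0,1,0,0,1]
  have h6 := key ![0,1,0,0,1,0]
  have h7 := key ![0,0,0,1,1,0]
  have v5 : ∀ p q r s t u : ℚ, ![p,q,r,s,t,u] 5 = u := fun _ _ _ _ _ _ => rfl
  have v2 : ∀ p q r s t u : ℚ, ![p,q,r,s,t,u] 2 = r := fun _ _ _ _ _ _ => rfl
  have v3 : ∀ p q r s t u : ℚ, ![p,q,r,s,t,u] 3 = s := fun _ _ _ _ _ _ => rfl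
  have v4 : ∀ p q r s t u : ℚ, ![p,q,r,s,t,u] 4 = t := fun _ _ _ _ _ _ => rfl
  norm_num [K4G, v5, v2, v3, v4] at h1 h2 h3 h4 h5 h6 h7
  have h2' : (c 0 : ℚ) = 0 := by exact_mod_cast h2
  have h3' : (c 2 : ℚ) = 0 := by exact_mod_cast h3
  have h4' : (c 4 : ℚ) = 0 := by exact_mod_cast h4
  linarith
end

section
/- A positive definite quadratic form Q on ℤ^g that can be written as Q = Σᵢ αᵢ (eᵢ)², where αᵢ > 0 and {eᵢ} is a totally unimodular system of linear functionals in the dual lattice, has Voronoi cell equal to a zonotope, namely the Minkowski sum of the segments [-αᵢeᵢ/2, αᵢeᵢ/2] (after identifying functionals with vectors via Q). -/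
/-- The bilinear form `Q(x,y) = Σᵢ αᵢ eᵢ(x) eᵢ(y)` on `ℝ^g` given by scalars `αᵢ`
and integral linear functionals `eᵢ ∈ (ℤ^g)*`. -/
def dicingForm {g m : ℕ} (α : Fin m → ℝ) (e : Fin m → (Fin g → ℤ)) :
    (Fin g → ℝ) → (Fin g → ℝ) → ℝ :=
  fun x y => ∑ i, α i * (∑ j, (e i j : ℝ) * x j) * (∑ j, (e i j : ℝ) * y j)

/-- `{eᵢ}` is totally unimodular: every square minor of the matrix of the
functionals is `0`, `1` or `-1` (equivalently, every subset which is an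
`ℝ`-basis of the dual space is a `ℤ`-basis of the dual lattice). -/
def TotallyUnimodular {g m : ℕ} (e : Fin m → (Fin g → ℤ)) : Prop :=
  ∀ (k : ℕ) (r : Fin k → Fin m) (c : Fin k → Fin g),
    Function.Injective r → Function.Injective c →
      (Matrix.of fun i j => e (r i) (c j)).det ∈ ({0, 1, -1} : Set ℤ)

namespace Stmt8Aux
open Finset Module Submodule

variable {g m : ℕ}

def phi (e : Fin m → Fin g → ℤ) (i : Fin m) (x : Fin g → ℝ) : ℝ := ∑ j, (e i j : ℝ) * x j

lemma phi_add (e : Fin m → Fin g → ℤ) (i : Fin m) (x y : Fin g → ℝ) :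
    phi e i (x + y) = phi e i x + phi e i y := by
  simp [phi, mul_add, Finset.sum_add_distrib]

lemma phi_smul (e : Fin m → Fin g → ℤ) (i : Fin m) (c : ℝ) (x : Fin g → ℝ) :
    phi e i (c • x) = c * phi e i x := by
  simp only [phi, Pi.smul_apply, smul_eq_mul, Finset.mul_sum]
  exact Finset.sum_congr rfl fun j _ => by ring

lemma phi_sub (e : Fin m → Fin g → ℤ) (i : Fin m) (x y : Fin g → ℝ) :
    phi e i (x - y) = phi e i x - phi e i y := by
  simp [phi, mul_sub, Finset.sum_sub_distrib]

lemma phi_zero (e : Fin m → Fin g → ℤ) (i : Fin m) : phi e i 0 = 0 := by simp [phi]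

lemma phi_intCast (e : Fin m → Fin g → ℤ) (i : Fin m) (r : Fin g → ℤ) :
    phi e i (fun j => (r j : ℝ)) = ((∑ j, e i j * r j : ℤ) : ℝ) := by
  unfold phi; push_cast; rfl

lemma phi_continuous (e : Fin m → Fin g → ℤ) (i : Fin m) : Continuous (phi e i) := by
  unfold phi
  exact continuous_finset_sum _ fun j _ => continuous_const.mul (continuous_apply j)

lemma dicing_eq (α : Fin m → ℝ) (e : Fin m → Fin g → ℤ) (x y : Fin g → ℝ) :
    dicingForm α e x y = ∑ i, α i * phi e i x * phi e i y := rfl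

lemma dicing_comm (α : Fin m → ℝ) (e : Fin m → Fin g → ℤ) (x y : Fin g → ℝ) :
    dicingForm α e x y = dicingForm α e y x := by
  unfold dicingForm; exact Finset.sum_congr rfl fun i _ => by ring

lemma dicing_add_right (α : Fin m → ℝ) (e : Fin m → Fin g → ℤ) (x y z : Fin g → ℝ) :
    dicingForm α e x (y + z) = dicingForm α e x y + dicingForm α e x z := by
  rw [dicing_eq, dicing_eq, dicing_eq, ← Finset.sum_add_distrib]
  exact Finset.sum_congr rfl fun i _ => by rw [phi_add]; ring

lemma dicing_smul_right (α : Fin m → ℝ) (e : Fin m → Fin g → ℤ) (x : Fin g → ℝ) (c : ℝ)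
    (y : Fin g → ℝ) : dicingForm α e x (c • y) = c * dicingForm α e x y := by
  rw [dicing_eq, dicing_eq, Finset.mul_sum]
  exact Finset.sum_congr rfl fun i _ => by rw [phi_smul]; ring

lemma dicing_sub (α : Fin m → ℝ) (e : Fin m → Fin g → ℤ) (x y : Fin g → ℝ) :
    dicingForm α e (x - y) (x - y)
      = dicingForm α e x x - 2 * dicingForm α e x y + dicingForm α e y y := by
  rw [dicing_eq, dicing_eq, dicing_eq, dicing_eq]
  have h : ∀ i : Fin m, α i * phi e i (x - y) * phi e i (x - y)
      = (α i * phi e i x * phi e i x - 2 * (α i * phi e i x * phi e i y))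
        + α i * phi e i y * phi e i y := fun i => by rw [phi_sub]; ring
  rw [Finset.sum_congr rfl fun i _ => h i, Finset.sum_add_distrib, Finset.sum_sub_distrib,
    ← Finset.mul_sum]

lemma dicing_sum_right (α : Fin m → ℝ) (e : Fin m → Fin g → ℤ) (x : Fin g → ℝ)
    {ι : Type*} (s : Finset ι) (c : ι → ℝ) (p : ι → Fin g → ℝ) :
    dicingForm α e x (∑ k ∈ s, c k • p k) = ∑ k ∈ s, c k * dicingForm α e x (p k) := by
  classical
  induction s using Finset.cons_induction with
  | empty => simp [dicing_eq, phi_zero]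
  | cons a s ha ih => rw [Finset.sum_cons, dicing_add_right, dicing_smul_right, ih, Finset.sum_cons]

lemma dicing_sum_left (α : Fin m → ℝ) (e : Fin m → Fin g → ℤ) (y : Fin g → ℝ)
    {ι : Type*} (s : Finset ι) (c : ι → ℝ) (p : ι → Fin g → ℝ) :
    dicingForm α e (∑ k ∈ s, c k • p k) y = ∑ k ∈ s, c k * dicingForm α e (p k) y := by
  rw [dicing_comm, dicing_sum_right]
  exact Finset.sum_congr rfl fun k _ => by rw [dicing_comm]

lemma dicing_continuous_right (α : Fin m → ℝ) (e : Fin m → Fin g → ℤ) (x : Fin g → ℝ) :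
    Continuous (fun y => dicingForm α e x y) := by
  unfold dicingForm
  exact continuous_finset_sum _ fun i _ =>
    continuous_const.mul (continuous_finset_sum _ fun j _ => continuous_const.mul (continuous_apply j))


/-- the "dot with d vanishes" submodule -/
def dotKer (d : Fin g → ℝ) : Submodule ℝ (Fin g → ℝ) where
  carrier := {u | ∑ j, u j * d j = 0}
  add_mem' := by
    intro a b ha hb
    simp only [Set.mem_setOf_eq, Pi.add_apply, add_mul, Finset.sum_add_distrib] at *
    rw [ha, hb, add_zero]
  zero_mem' := by simp
  smul_mem' := by
    intro c a ha
    simp only [Set.mem_setOf_eq, Pi.smul_apply, smul_eq_mul] at *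
    rw [show ∀ s : Finset (Fin g), ∑ j ∈ s, c * a j * d j = c * ∑ j ∈ s, a j * d j from
      fun s => by rw [Finset.mul_sum]; exact Finset.sum_congr rfl fun j _ => by ring, ha, mul_zero]

theorem exists_cocircuit (e : Fin m → Fin g → ℤ) (hTU : TotallyUnimodular e)
    (hinj : ∀ x : Fin g → ℝ, (∀ i, phi e i x = 0) → x = 0)
    (w : Fin g → ℝ) (hw : w ≠ 0)
    (hker : ∀ d : Fin g → ℝ, (∀ i, phi e i w = 0 → phi e i d = 0) → ∃ c : ℝ, d = c • w) :
    ∃ (r : Fin g → ℤ) (c : ℝ), c ≠ 0 ∧ w = c • (fun j => (r j : ℝ)) ∧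
      ∀ i, (∑ j, e i j * r j) = 0 ∨ (∑ j, e i j * r j) = 1 ∨ (∑ j, e i j * r j) = -1 := by
  classical
  set Er : Fin m → (Fin g → ℝ) := fun i j => (e i j : ℝ) with hEr
  have phi_dot : ∀ (i : Fin m) (d : Fin g → ℝ), phi e i d = ∑ j, Er i j * d j := fun i d => rfl
  set T : Set (Fin m) := {i | phi e i w = 0} with hT
  obtain ⟨s, hsub, hspan, hli⟩ := exists_linearIndependent ℝ (Er '' T)
  have hsfin : s.Finite := hli.setFinite
  set F : Finset (Fin g → ℝ) := hsfin.toFinset with hF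
  set n : ℕ := F.card with hn
  set eqv : {x // x ∈ F} ≃ Fin n := F.equivFin with heqv
  set vfam : Fin n → (Fin g → ℝ) := fun a => (eqv.symm a : Fin g → ℝ) with hvfam
  have vfam_mem : ∀ a, vfam a ∈ s := by
    intro a
    have h2 := (eqv.symm a).2
    exact (Set.Finite.mem_toFinset hsfin).mp h2
  have vfam_inj : Function.Injective vfam := by
    intro a b hab
    have : eqv.symm a = eqv.symm b := Subtype.ext hab
    exact eqv.symm.injective this
  have vfam_li : LinearIndependent ℝ vfam := by
    set emb : Fin n → s := fun a => ⟨vfam a, vfam_mem a⟩ with hemb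
    have hembinj : Function.Injective emb := by
      intro a b hab
      exact vfam_inj (Subtype.mk_eq_mk.mp hab)
    have hco : vfam = (Subtype.val : s → (Fin g → ℝ)) ∘ emb := rfl
    rw [hco]
    exact hli.comp emb hembinj
  have vfam_range : Set.range vfam = s := by
    apply Set.Subset.antisymm
    · rintro - ⟨a, rfl⟩; exact vfam_mem a
    · intro u hu
      have huF : u ∈ F := by rw [hF, Set.Finite.mem_toFinset]; exact hu
      exact ⟨eqv ⟨u, huF⟩, by simp [hvfam]⟩
  -- choose indices
  have hpre : ∀ a : Fin n, ∃ i, phi e i w = 0 ∧ Er i = vfam a := by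
    intro a
    obtain ⟨i, hiT, hiE⟩ := hsub (vfam_mem a)
    exact ⟨i, hiT, hiE⟩
  choose idx idx_tight idx_row using hpre
  have idx_inj : Function.Injective idx := fun a b hab => vfam_inj (by rw [← idx_row, ← idx_row, hab])
  -- j₀
  obtain ⟨j₀, hj₀⟩ : ∃ i, phi e i w ≠ 0 := by
    by_contra h
    push_neg at h
    exact hw (hinj w h)
  -- span kill
  have span_kill : ∀ d : Fin g → ℝ, (∀ a, phi e (idx a) d = 0) →
      ∀ i, phi e i w = 0 → phi e i d = 0 := by
    intro d hd i hi
    have hmem : Er i ∈ Submodule.span ℝ s := by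
      rw [hspan]; exact subset_span ⟨i, hi, rfl⟩
    have hsD : s ⊆ (dotKer d : Set (Fin g → ℝ)) := by
      intro u hu
      obtain ⟨a, rfl⟩ : ∃ a, vfam a = u := by
        rw [← vfam_range] at hu; exact hu
      have := hd a
      rw [phi_dot, idx_row] at this
      exact this
    have := (Submodule.span_le.mpr hsD) hmem
    rw [phi_dot]
    exact this
  -- cons family
  set ρ : Fin (n + 1) → Fin m := Fin.cons j₀ idx with hρ
  have j₀_not : j₀ ∉ Set.range idx := by
    rintro ⟨a, rfl⟩; exact hj₀ (idx_tight a)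
  have ρ_inj : Function.Injective ρ := Fin.cons_injective_iff.mpr ⟨j₀_not, idx_inj⟩
  -- zero kernel
  have kerzero : ∀ d : Fin g → ℝ, (∀ i', phi e (ρ i') d = 0) → d = 0 := by
    intro d hd
    have h0 : ∀ a, phi e (idx a) d = 0 := fun a => by
      have := hd a.succ; rwa [hρ, Fin.cons_succ] at this
    obtain ⟨c, hc⟩ := hker d (span_kill d h0)
    have hj : phi e j₀ d = 0 := by
      have := hd 0; rwa [hρ, Fin.cons_zero] at this
    rw [hc, phi_smul] at hj
    rcases mul_eq_zero.mp hj with h | h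
    · rw [hc, h, zero_smul]
    · exact absurd h hj₀
  -- dimension count
  have Er_idx : Er ∘ idx = vfam := funext idx_row
  have hle : n + 1 ≤ g := by
    have li : LinearIndependent ℝ (Er ∘ ρ) := by
      rw [hρ, Fin.comp_cons, linearIndependent_fin_cons]
      constructor
      · rw [Er_idx]; exact vfam_li
      · rw [Er_idx, vfam_range]
        intro hmem
        have hsW : s ⊆ (dotKer w : Set (Fin g → ℝ)) := by
          intro u hu
          obtain ⟨i, hiT, rfl⟩ := hsub hu
          have : phi e i w = 0 := hiT
          rw [phi_dot] at this
          exact this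
        have := (Submodule.span_le.mpr hsW) hmem
        exact hj₀ (by rw [phi_dot]; exact this)
    have hcard := li.fintype_card_le_finrank
    simpa [Module.finrank_fintype_fun_eq_card] using hcard
  have hge : g ≤ n + 1 := by
    set Φ : (Fin g → ℝ) →ₗ[ℝ] (Fin (n + 1) → ℝ) :=
      { toFun := fun d => fun i' => phi e (ρ i') d
        map_add' := by
          intro a b; funext i'
          simp [phi, mul_add, Finset.sum_add_distrib]
        map_smul' := by
          intro c a; funext i'
          simp [phi_smul] } with hΦ
    have hΦinj : Function.Injective Φ := by
      intro a b hab
      have : Φ (a - b) = 0 := by rw [map_sub, hab, sub_self]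
      have hz : a - b = 0 := kerzero _ (fun i' => congrFun this i')
      exact sub_eq_zero.mp hz
    calc g = Module.finrank ℝ (Fin g → ℝ) := by simp [Module.finrank_fintype_fun_eq_card]
    _ ≤ Module.finrank ℝ (Fin (n + 1) → ℝ) := LinearMap.finrank_le_finrank_of_injective hΦinj
    _ = n + 1 := by simp [Module.finrank_fintype_fun_eq_card]
  have hg : n + 1 = g := le_antisymm hle hge
  set ce : Fin (n + 1) ≃ Fin g := finCongr hg with hce
  -- any cons family with a non-tight extra row gives an invertible matrix
  have detB_ne : ∀ jj : Fin m, phi e jj w ≠ 0 →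
      (Matrix.of fun i' j' => (e ((Fin.cons jj idx : Fin (n+1) → Fin m) i') (ce j') : ℤ)).det ≠ 0 := by
    intro jj hjj h0
    have kz : ∀ d : Fin g → ℝ, (∀ i', phi e ((Fin.cons jj idx : Fin (n+1) → Fin m) i') d = 0) → d = 0 := by
      intro d hd
      have h0' : ∀ a, phi e (idx a) d = 0 := fun a => by
        have := hd a.succ; rwa [Fin.cons_succ] at this
      obtain ⟨c, hc⟩ := hker d (span_kill d h0')
      have hjd : phi e jj d = 0 := by have := hd 0; rwa [Fin.cons_zero] at this
      rw [hc, phi_smul] at hjd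
      rcases mul_eq_zero.mp hjd with h | h
      · rw [hc, h, zero_smul]
      · exact absurd h hjj
    have hR : (((Int.castRingHom ℝ).mapMatrix
        (Matrix.of fun i' j' => (e ((Fin.cons jj idx : Fin (n+1) → Fin m) i') (ce j') : ℤ))) :
          Matrix (Fin (n+1)) (Fin (n+1)) ℝ).det = 0 := by
      rw [← RingHom.map_det, h0]; simp
    obtain ⟨vv, hvv0, hvv⟩ := Matrix.exists_mulVec_eq_zero_iff.mpr hR
    set d : Fin g → ℝ := fun j => vv (ce.symm j) with hd
    have hdz : ∀ i', phi e ((Fin.cons jj idx : Fin (n+1) → Fin m) i') d = 0 := by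
      intro i'
      have h1 := congrFun hvv i'
      simp only [Matrix.mulVec, dotProduct, RingHom.mapMatrix_apply, Matrix.map_apply,
        Matrix.of_apply, Pi.zero_apply] at h1
      rw [phi, ← h1]
      exact (Fintype.sum_equiv ce (fun j' => ((e ((Fin.cons jj idx : Fin (n+1) → Fin m) i') (ce j') : ℤ) : ℝ) * vv j')
        (fun j => ((e ((Fin.cons jj idx : Fin (n+1) → Fin m) i') j : ℤ) : ℝ) * d j) (fun j' => by simp [hd])).symm
    have hdzero := kz d hdz
    apply hvv0
    funext j'
    have h2 := congrFun hdzero (ce j')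
    simpa [hd] using h2
  have cons_inj : ∀ jj : Fin m, phi e jj w ≠ 0 →
      Function.Injective (Fin.cons jj idx : Fin (n+1) → Fin m) := by
    intro jj hjj
    refine Fin.cons_injective_iff.mpr ⟨?_, idx_inj⟩
    rintro ⟨a, rfl⟩; exact hjj (idx_tight a)
  have detB_pm : ∀ jj : Fin m, phi e jj w ≠ 0 →
      (Matrix.of fun i' j' => (e ((Fin.cons jj idx : Fin (n+1) → Fin m) i') (ce j') : ℤ)).det = 1 ∨
      (Matrix.of fun i' j' => (e ((Fin.cons jj idx : Fin (n+1) → Fin m) i') (ce j') : ℤ)).det = -1 := by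
    intro jj hjj
    have := hTU (n+1) (Fin.cons jj idx) (fun j' => ce j') (cons_inj jj hjj)
      (fun a b hab => ce.injective hab)
    simp only [Set.mem_insert_iff, Set.mem_singleton_iff] at this
    rcases this with h | h | h
    · exact absurd h (detB_ne jj hjj)
    · exact Or.inl h
    · exact Or.inr h
  set B : Matrix (Fin (n+1)) (Fin (n+1)) ℤ :=
    Matrix.of fun i' j' => e ((Fin.cons j₀ idx : Fin (n+1) → Fin m) i') (ce j') with hB
  have hdetB1 : B.det = 1 ∨ B.det = -1 := detB_pm j₀ hj₀
  set u : Fin (n+1) → ℤ := Pi.single (0 : Fin (n+1)) 1 with hu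
  set r' : Fin (n+1) → ℤ := B.adjugate.mulVec u with hr'
  set r : Fin g → ℤ := fun j => r' (ce.symm j) with hrdef
  have hBr : B.mulVec r' = B.det • u := by
    rw [hr', Matrix.mulVec_mulVec, Matrix.mul_adjugate, Matrix.smul_mulVec,
      Matrix.one_mulVec]
  clear_value r'
  have sum_reindex : ∀ i : Fin m, (∑ j, e i j * r j) = ∑ j', e i (ce j') * r' j' := by
    intro i
    refine Fintype.sum_equiv ce.symm _ _ ?_
    intro j; simp [hrdef]
  have hrow : ∀ i', (∑ j, e ((Fin.cons j₀ idx : Fin (n+1) → Fin m) i') j * r j) = B.det * u i' := by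
    intro i'
    rw [sum_reindex]
    have h1 := congrFun hBr i'
    simpa [Matrix.mulVec, dotProduct, hB] using h1
  have hrow0 : (∑ j, e j₀ j * r j) = B.det := by
    have h1 := hrow 0
    rwa [Fin.cons_zero, hu, Pi.single_eq_same, mul_one] at h1
  have hrowa : ∀ a : Fin n, (∑ j, e (idx a) j * r j) = 0 := by
    intro a
    have h1 := hrow a.succ
    rwa [Fin.cons_succ, hu, Pi.single_eq_of_ne (Fin.succ_ne_zero a), mul_zero] at h1
  set rr : Fin g → ℝ := fun j => (r j : ℝ) with hrr
  have hrr_tight : ∀ i, phi e i w = 0 → phi e i rr = 0 := by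
    apply span_kill
    intro a
    rw [hrr, phi_intCast, hrowa]
    simp
  obtain ⟨c₀, hc₀⟩ := hker rr hrr_tight
  have hphij₀ : phi e j₀ rr = (B.det : ℝ) := by rw [hrr, phi_intCast, hrow0]
  have hc₀ne : c₀ ≠ 0 := by
    intro h
    rw [h, zero_smul] at hc₀
    rw [hc₀] at hphij₀
    rw [phi_zero] at hphij₀
    rcases hdetB1 with h2 | h2 <;> rw [h2] at hphij₀ <;> norm_num at hphij₀
  refine ⟨r, c₀⁻¹, inv_ne_zero hc₀ne, ?_, ?_⟩
  · rw [← hrr, hc₀, smul_smul, inv_mul_cancel₀ hc₀ne, one_smul]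
  · intro k
    by_cases hk : (∑ j, e k j * r j) = 0
    · exact Or.inl hk
    right
    have hphik : phi e k rr = ((∑ j, e k j * r j : ℤ) : ℝ) := by rw [hrr, phi_intCast]
    have hkw : phi e k w ≠ 0 := by
      intro hzero
      have h1 := hrr_tight k hzero
      rw [hphik] at h1
      exact hk (by exact_mod_cast h1)
    set B' : Matrix (Fin (n+1)) (Fin (n+1)) ℤ :=
      Matrix.of fun i' j' => e ((Fin.cons k idx : Fin (n+1) → Fin m) i') (ce j') with hB'
    have hdet' : B'.det = 1 ∨ B'.det = -1 := detB_pm k hkw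
    set q : ℤ := ∑ j, e k j * r j with hq
    have hB'r : B'.mulVec r' = q • u := by
      funext i'
      refine Fin.cases ?_ ?_ i'
      · show (B'.mulVec r') 0 = (q • u) 0
        simp only [Matrix.mulVec, dotProduct, hB', Matrix.of_apply, Fin.cons_zero,
          Pi.smul_apply, hu, Pi.single_eq_same, smul_eq_mul, mul_one]
        rw [hq, sum_reindex k]
      · intro a
        show (B'.mulVec r') a.succ = (q • u) a.succ
        simp only [Matrix.mulVec, dotProduct, hB', Matrix.of_apply, Fin.cons_succ,
          Pi.smul_apply, hu, Pi.single_eq_of_ne (Fin.succ_ne_zero a), smul_eq_mul, mul_zero]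
        rw [← sum_reindex (idx a)]
        exact hrowa a
    set s' : Fin (n+1) → ℤ := B'.adjugate.mulVec u with hs'
    clear_value s'
    have hadj : B'.det • r' = q • s' := by
      calc B'.det • r' = (B'.adjugate * B').mulVec r' := by
            rw [Matrix.adjugate_mul, Matrix.smul_mulVec, Matrix.one_mulVec]
      _ = B'.adjugate.mulVec (B'.mulVec r') := by rw [Matrix.mulVec_mulVec]
      _ = B'.adjugate.mulVec (q • u) := by rw [hB'r]
      _ = q • s' := by rw [Matrix.mulVec_smul, hs']
    have hcomp : B'.det * (∑ j', e j₀ (ce j') * r' j') = q * (∑ j', e j₀ (ce j') * s' j') := by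
      rw [Finset.mul_sum, Finset.mul_sum]
      refine Finset.sum_congr rfl fun j' _ => ?_
      have h1 := congrFun hadj j'
      simp only [Pi.smul_apply, smul_eq_mul] at h1
      calc B'.det * (e j₀ (ce j') * r' j') = e j₀ (ce j') * (B'.det * r' j') := by ring
      _ = e j₀ (ce j') * (q * s' j') := by rw [h1]
      _ = q * (e j₀ (ce j') * s' j') := by ring
    rw [← sum_reindex j₀, hrow0] at hcomp
    have hpm : q * (∑ j', e j₀ (ce j') * s' j') = 1 ∨
        q * (∑ j', e j₀ (ce j') * s' j') = -1 := by
      rcases hdet' with h | h <;> rcases hdetB1 with h2 | h2 <;> rw [← hcomp, h, h2] <;> norm_num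
    have hunit : IsUnit q := by
      rcases hpm with h | h
      · exact IsUnit.of_mul_eq_one _ h
      · exact IsUnit.of_mul_eq_one (-(∑ j', e j₀ (ce j') * s' j')) (by linarith)
    exact Int.isUnit_iff.mp hunit


theorem mem_zonotope (α : Fin m → ℝ) (e : Fin m → Fin g → ℤ)
    (hpos : ∀ x : Fin g → ℝ, x ≠ 0 → 0 < dicingForm α e x x)
    (v : Fin m → (Fin g → ℝ))
    (hv : ∀ i (y : Fin g → ℝ), dicingForm α e (v i) y = phi e i y)
    (x : Fin g → ℝ)
    (hsupp : ∀ w : Fin g → ℝ, dicingForm α e x w ≤ (1/2) * ∑ i, α i * |phi e i w|) :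
    ∃ t : Fin m → ℝ, (∀ i, t i ∈ Set.Icc (-(1:ℝ)/2) (1/2)) ∧ x = ∑ i, (t i * α i) • v i := by
  classical
  set Lmap : (Fin m → ℝ) →ₗ[ℝ] (Fin g → ℝ) :=
    { toFun := fun t => ∑ i, (t i * α i) • v i
      map_add' := by
        intro t t'
        rw [← Finset.sum_add_distrib]
        exact Finset.sum_congr rfl fun i _ => by
          simp [add_mul, add_smul]
      map_smul' := by
        intro c t
        simp only [RingHom.id_apply, Finset.smul_sum]
        exact Finset.sum_congr rfl fun i _ => by
          simp [mul_assoc, smul_smul] } with hLmap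
  set box : Set (Fin m → ℝ) := Set.Icc (fun _ => -(1:ℝ)/2) (fun _ => (1:ℝ)/2) with hbox
  set Z : Set (Fin g → ℝ) := Lmap '' box with hZ
  suffices hxZ : x ∈ Z by
    obtain ⟨t, ht, hxt⟩ := hxZ
    rw [Set.mem_Icc] at ht
    refine ⟨t, fun i => ⟨ht.1 i, ht.2 i⟩, hxt.symm⟩
  by_contra hxZ
  have hZconv : Convex ℝ Z := (convex_Icc _ _).linear_image Lmap
  have hLcont : Continuous Lmap := by
    show Continuous fun t : Fin m → ℝ => ∑ i, (t i * α i) • v i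
    apply continuous_finset_sum
    intro i _
    exact ((continuous_apply i).mul continuous_const).smul continuous_const
  have hZcomp : IsCompact Z := isCompact_Icc.image hLcont
  obtain ⟨f, u', hfu, hux⟩ := geometric_hahn_banach_closed_point hZconv hZcomp.isClosed hxZ
  set uu : Fin g → ℝ := fun j => f (fun j' => if j = j' then (1:ℝ) else 0) with huu
  have hf : ∀ y : Fin g → ℝ, f y = ∑ j, uu j * y j := by
    intro y
    conv_lhs => rw [pi_eq_sum_univ y]
    rw [map_sum]
    exact Finset.sum_congr rfl fun j _ => by rw [map_smul, smul_eq_mul, mul_comm]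
  set S : (Fin g → ℝ) →ₗ[ℝ] (Fin g → ℝ) :=
    { toFun := fun ww => fun j => ∑ i, α i * phi e i ww * (e i j : ℝ)
      map_add' := by
        intro a b
        funext j
        show ∑ i, α i * phi e i (a + b) * (e i j : ℝ)
            = (∑ i, α i * phi e i a * (e i j : ℝ)) + ∑ i, α i * phi e i b * (e i j : ℝ)
        rw [← Finset.sum_add_distrib]
        exact Finset.sum_congr rfl fun i _ => by rw [phi_add]; ring
      map_smul' := by
        intro c a
        funext j
        show ∑ i, α i * phi e i (c • a) * (e i j : ℝ) = c * ∑ i, α i * phi e i a * (e i j : ℝ)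
        rw [Finset.mul_sum]
        exact Finset.sum_congr rfl fun i _ => by rw [phi_smul]; ring } with hS
  have hSQ : ∀ ww y : Fin g → ℝ, (∑ j, S ww j * y j) = dicingForm α e ww y := by
    intro ww y
    rw [dicing_eq]
    calc ∑ j, S ww j * y j
        = ∑ j, ∑ i, α i * phi e i ww * ((e i j : ℝ) * y j) := by
          refine Finset.sum_congr rfl fun j _ => ?_
          show (∑ i, α i * phi e i ww * (e i j : ℝ)) * y j = _
          rw [Finset.sum_mul]
          exact Finset.sum_congr rfl fun i _ => by ring
      _ = ∑ i, ∑ j, α i * phi e i ww * ((e i j : ℝ) * y j) := Finset.sum_comm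
      _ = ∑ i, α i * phi e i ww * phi e i y := by
          refine Finset.sum_congr rfl fun i _ => ?_
          rw [← Finset.mul_sum]
          rfl
  have hSinj : Function.Injective S := by
    intro a b hab
    by_cases h : a - b = 0
    · exact sub_eq_zero.mp h
    · exfalso
      have h0 : S (a - b) = 0 := by rw [map_sub, hab, sub_self]
      have h1 := hSQ (a - b) (a - b)
      rw [h0] at h1
      simp only [Pi.zero_apply, zero_mul, Finset.sum_const_zero] at h1
      exact (hpos _ h).ne' h1.symm
  obtain ⟨w, hwu⟩ := (LinearMap.injective_iff_surjective).mp hSinj uu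
  have hfQ : ∀ y, f y = dicingForm α e w y := by
    intro y
    rw [hf y, ← hwu, hSQ]
  set tstar : Fin m → ℝ := fun i => if 0 ≤ phi e i w then (1/2 : ℝ) else -(1/2) with htstar
  have htbox : tstar ∈ box := by
    rw [hbox, Set.mem_Icc]
    constructor <;> intro i <;> simp only [htstar] <;> split <;> norm_num
  have hzZ : Lmap tstar ∈ Z := ⟨tstar, htbox, rfl⟩
  have hfz : f (Lmap tstar) = (1/2) * ∑ i, α i * |phi e i w| := by
    rw [hfQ]
    show dicingForm α e w (∑ i, (tstar i * α i) • v i) = _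
    rw [dicing_sum_right, Finset.mul_sum]
    refine Finset.sum_congr rfl fun i _ => ?_
    rw [dicing_comm, hv]
    by_cases h : 0 ≤ phi e i w
    · rw [htstar]; simp only [if_pos h]
      rw [abs_of_nonneg h]; ring
    · rw [htstar]; simp only [if_neg h]
      rw [abs_of_neg (lt_of_not_ge h)]; ring
  have hcon1 : f (Lmap tstar) < u' := hfu _ hzZ
  have hcon2 : u' < f x := hux
  have hcon3 : f x ≤ f (Lmap tstar) := by
    rw [hfz, hfQ, dicing_comm]
    exact hsupp w
  linarith

theorem support_bound (α : Fin m → ℝ) (hα : ∀ i, 0 < α i) (e : Fin m → Fin g → ℤ)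
    (hTU : TotallyUnimodular e)
    (hpos : ∀ x : Fin g → ℝ, x ≠ 0 → 0 < dicingForm α e x x)
    (x : Fin g → ℝ)
    (hVor : ∀ l : Fin g → ℤ, 2 * dicingForm α e x (fun j => (l j : ℝ)) ≤
      dicingForm α e (fun j => (l j : ℝ)) (fun j => (l j : ℝ)))
    (w₀ : Fin g → ℝ) :
    dicingForm α e x w₀ ≤ (1/2) * ∑ i, α i * |phi e i w₀| := by
  classical
  have hinj : ∀ y : Fin g → ℝ, (∀ i, phi e i y = 0) → y = 0 := by
    intro y hy
    by_contra h
    have h1 := hpos y h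
    rw [dicing_eq] at h1
    rw [Finset.sum_eq_zero (fun i _ => by rw [hy i]; ring)] at h1
    exact lt_irrefl 0 h1
  by_cases h0 : ∀ i, phi e i w₀ = 0
  · have hL : dicingForm α e x w₀ = 0 := by
      rw [dicing_eq]; exact Finset.sum_eq_zero fun i _ => by rw [h0 i]; ring
    have hR : (∑ i, α i * |phi e i w₀|) = 0 := Finset.sum_eq_zero fun i _ => by rw [h0 i]; simp
    rw [hL, hR]; norm_num
  push_neg at h0
  obtain ⟨i₀, hi₀⟩ := h0
  set σ : Fin m → ℝ := fun i => if 0 ≤ phi e i w₀ then 1 else -1 with hσ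
  have hσ1 : ∀ i, σ i = 1 ∨ σ i = -1 := fun i => by
    rw [hσ]; dsimp only; split
    · exact Or.inl rfl
    · exact Or.inr rfl
  have hσabs : ∀ i, σ i * phi e i w₀ = |phi e i w₀| := by
    intro i; rw [hσ]; dsimp only; split
    · rw [abs_of_nonneg ‹_›]; ring
    · rw [abs_of_neg (lt_of_not_ge ‹_›)]; ring
  set s₀ : ℝ := ∑ i, α i * |phi e i w₀| with hs₀
  have hs₀pos : 0 < s₀ := by
    rw [hs₀]
    refine Finset.sum_pos' (fun i _ => mul_nonneg (hα i).le (abs_nonneg _)) ?_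
    exact ⟨i₀, Finset.mem_univ _, mul_pos (hα i₀) (abs_pos.mpr hi₀)⟩
  have phi_comb : ∀ (i : Fin m) (a b : ℝ) (q1 q2 : Fin g → ℝ),
      phi e i (a • q1 + b • q2) = a * phi e i q1 + b * phi e i q2 := by
    intro i a b q1 q2; rw [phi_add, phi_smul, phi_smul]
  set K : Set (Fin g → ℝ) :=
    {q | (∀ i, 0 ≤ σ i * phi e i q) ∧ (∑ i, α i * (σ i * phi e i q)) = 1} with hK
  have hKclosed : IsClosed K := by
    have h1 : IsClosed {q : Fin g → ℝ | ∀ i, 0 ≤ σ i * phi e i q} := by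
      have heq : {q : Fin g → ℝ | ∀ i, 0 ≤ σ i * phi e i q}
          = ⋂ i, {q | 0 ≤ σ i * phi e i q} := by ext q; simp
      rw [heq]
      exact isClosed_iInter fun i =>
        isClosed_le continuous_const (continuous_const.mul (phi_continuous e i))
    have h2 : IsClosed {q : Fin g → ℝ | (∑ i, α i * (σ i * phi e i q)) = 1} :=
      isClosed_eq (continuous_finset_sum _ fun i _ =>
        continuous_const.mul (continuous_const.mul (phi_continuous e i))) continuous_const
    exact h1.inter h2
  set N : (Fin g → ℝ) → ℝ := fun y => ∑ i, |phi e i y| with hN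
  have hNcont : Continuous N := by
    rw [hN]
    exact continuous_finset_sum _ fun i _ => (phi_continuous e i).abs
  have hw₀ne : w₀ ≠ 0 := fun h => hi₀ (by rw [h, phi_zero])
  haveI : Nontrivial (Fin g → ℝ) := nontrivial_of_ne w₀ 0 hw₀ne
  obtain ⟨y₀, hy₀s, hy₀min⟩ := (isCompact_sphere (0 : Fin g → ℝ) 1).exists_isMinOn
    (NormedSpace.sphere_nonempty.mpr zero_le_one) hNcont.continuousOn
  have hδpos : 0 < N y₀ := by
    rcases lt_or_eq_of_le (Finset.sum_nonneg (fun i (_ : i ∈ Finset.univ) =>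
        abs_nonneg (phi e i y₀)) : (0:ℝ) ≤ N y₀) with h | h
    · exact h
    · exfalso
      have hz : ∀ i, phi e i y₀ = 0 := by
        intro i
        have h2 := (Finset.sum_eq_zero_iff_of_nonneg
          (fun i (_ : i ∈ Finset.univ) => abs_nonneg (phi e i y₀))).mp h.symm i (Finset.mem_univ i)
        exact abs_eq_zero.mp h2
      have hy0 : y₀ = 0 := hinj y₀ hz
      rw [hy0] at hy₀s
      simp at hy₀s
  have hlow : ∀ y : Fin g → ℝ, N y₀ * ‖y‖ ≤ N y := by
    intro y
    by_cases h : y = 0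
    · rw [h]; simp [hN, phi_zero]
    · have hyn : ‖y‖ ≠ 0 := norm_ne_zero_iff.mpr h
      have hsph : ‖y‖⁻¹ • y ∈ Metric.sphere (0 : Fin g → ℝ) 1 := by
        simp [norm_smul, abs_of_nonneg (norm_nonneg y), inv_mul_cancel₀ hyn]
      have hmin := hy₀min hsph
      have hNsc : N (‖y‖⁻¹ • y) = ‖y‖⁻¹ * N y := by
        rw [hN]; dsimp only
        rw [Finset.mul_sum]
        refine Finset.sum_congr rfl fun i _ => ?_
        rw [phi_smul, abs_mul, abs_inv, abs_norm]
      have hmin2 : N y₀ ≤ ‖y‖⁻¹ * N y := by rw [← hNsc]; exact hmin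
      have hnpos : 0 < ‖y‖ := (norm_nonneg y).lt_of_ne (Ne.symm hyn)
      calc N y₀ * ‖y‖ ≤ (‖y‖⁻¹ * N y) * ‖y‖ := by nlinarith
      _ = N y := by field_simp
  have hKbdd : Bornology.IsBounded K := by
    refine Bornology.IsBounded.subset (Metric.isBounded_closedBall
      (x := (0 : Fin g → ℝ)) (r := (∑ i, (α i)⁻¹) / N y₀)) ?_
    intro q hq
    obtain ⟨hq1, hq2⟩ := hq
    have habsq : ∀ i, |phi e i q| = σ i * phi e i q := by
      intro i
      rcases hσ1 i with h | h
      · rw [h, one_mul]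
        have h2 := hq1 i; rw [h, one_mul] at h2
        exact abs_of_nonneg h2
      · rw [h]
        have h2 := hq1 i; rw [h] at h2
        rw [abs_of_nonpos (by linarith)]; ring
    have hNq : N q ≤ ∑ i, (α i)⁻¹ := by
      rw [hN]; dsimp only
      refine Finset.sum_le_sum fun i _ => ?_
      rw [habsq i]
      have hterm : α i * (σ i * phi e i q) ≤ 1 := by
        rw [← hq2]
        exact Finset.single_le_sum (f := fun i => α i * (σ i * phi e i q))
          (fun i _ => mul_nonneg (hα i).le (hq1 i)) (Finset.mem_univ i)
      calc σ i * phi e i q = (α i)⁻¹ * (α i * (σ i * phi e i q)) := by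
            rw [← mul_assoc, inv_mul_cancel₀ (hα i).ne', one_mul]
      _ ≤ (α i)⁻¹ * 1 := mul_le_mul_of_nonneg_left hterm (inv_nonneg.mpr (hα i).le)
      _ = (α i)⁻¹ := mul_one _
    have hnormq : ‖q‖ ≤ (∑ i, (α i)⁻¹) / N y₀ := by
      rw [le_div_iff₀ hδpos]
      nlinarith [hlow q]
    rw [Metric.mem_closedBall, dist_zero_right]
    exact hnormq
  have hKcomp : IsCompact K := Metric.isCompact_of_isClosed_isBounded hKclosed hKbdd
  have hKconv : Convex ℝ K := by
    intro q1 hq1 q2 hq2 a b ha hb hab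
    refine ⟨?_, ?_⟩
    · intro i
      rw [phi_comb]
      have h1 := hq1.1 i; have h2 := hq2.1 i
      nlinarith [mul_nonneg ha h1, mul_nonneg hb h2]
    · have heach : ∀ i, α i * (σ i * phi e i (a • q1 + b • q2))
          = a * (α i * (σ i * phi e i q1)) + b * (α i * (σ i * phi e i q2)) := by
        intro i; rw [phi_comb]; ring
      rw [Finset.sum_congr rfl fun i _ => heach i, Finset.sum_add_distrib,
        ← Finset.mul_sum, ← Finset.mul_sum, hq1.2, hq2.2, mul_one, mul_one]
      exact hab
  set fφ : (Fin g → ℝ) → ℝ :=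
    fun q => (1/2) * (∑ i, α i * (σ i * phi e i q)) - dicingForm α e x q with hfφ
  have hflin : ∀ (a b : ℝ) (q1 q2 : Fin g → ℝ),
      fφ (a • q1 + b • q2) = a * fφ q1 + b * fφ q2 := by
    intro a b q1 q2
    have h1 : dicingForm α e x (a • q1 + b • q2)
        = a * dicingForm α e x q1 + b * dicingForm α e x q2 := by
      rw [dicing_add_right, dicing_smul_right, dicing_smul_right]
    have h2 : (∑ i, α i * (σ i * phi e i (a • q1 + b • q2)))
        = a * (∑ i, α i * (σ i * phi e i q1)) + b * (∑ i, α i * (σ i * phi e i q2)) := by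
      rw [Finset.mul_sum, Finset.mul_sum, ← Finset.sum_add_distrib]
      exact Finset.sum_congr rfl fun i _ => by rw [phi_comb]; ring
    rw [hfφ]; dsimp only
    rw [h1, h2]; ring
  have hfcont : Continuous fφ := by
    rw [hfφ]
    refine Continuous.sub ?_ (dicing_continuous_right α e x)
    exact continuous_const.mul (continuous_finset_sum _ fun i _ =>
      continuous_const.mul (continuous_const.mul (phi_continuous e i)))
  have hext : ∀ q ∈ Set.extremePoints ℝ K, 0 ≤ fφ q := by
    intro q hqE
    obtain ⟨hqK, hqMax⟩ := mem_extremePoints.mp hqE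
    have hkerq : ∀ d : Fin g → ℝ, (∀ i, phi e i q = 0 → phi e i d = 0) → ∃ c : ℝ, d = c • q := by
      intro d hd
      set c : ℝ := ∑ i, α i * (σ i * phi e i d) with hc
      refine ⟨c, ?_⟩
      set d' : Fin g → ℝ := d - c • q with hd'
      have hd'1 : ∀ i, phi e i q = 0 → phi e i d' = 0 := by
        intro i hi
        rw [hd', phi_sub, phi_smul, hd i hi, hi]; ring
      have hd'2 : (∑ i, α i * (σ i * phi e i d')) = 0 := by
        have heach : ∀ i, α i * (σ i * phi e i d')
            = α i * (σ i * phi e i d) - c * (α i * (σ i * phi e i q)) := by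
          intro i; rw [hd', phi_sub, phi_smul]; ring
        rw [Finset.sum_congr rfl fun i _ => heach i, Finset.sum_sub_distrib, ← Finset.mul_sum,
          hqK.2, mul_one, ← hc, sub_self]
      have hd'0 : d' = 0 := by
        by_contra hne
        set P : Finset (Fin m) := Finset.univ.filter (fun i => phi e i q ≠ 0) with hP
        have hPne : P.Nonempty := by
          by_contra hPe
          rw [Finset.not_nonempty_iff_eq_empty] at hPe
          have hall : ∀ i, phi e i q = 0 := by
            intro i
            by_contra hne2
            have hiP : i ∈ P := by rw [hP]; exact Finset.mem_filter.mpr ⟨Finset.mem_univ _, hne2⟩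
            rw [hPe] at hiP; exact absurd hiP (Finset.notMem_empty i)
          have h2 := hqK.2
          rw [Finset.sum_eq_zero (fun i _ => by rw [hall i]; ring)] at h2
          norm_num at h2
        set ε : ℝ := P.inf' hPne (fun i => (σ i * phi e i q) / (|phi e i d'| + 1)) with hε
        have hεpos : 0 < ε := by
          rw [hε, Finset.lt_inf'_iff]
          intro i hi
          have hiq : phi e i q ≠ 0 := (Finset.mem_filter.mp hi).2
          have h1 : 0 < σ i * phi e i q := by
            rcases lt_or_eq_of_le (hqK.1 i) with h | h
            · exact h
            · exfalso
              rcases hσ1 i with hs | hs <;> rw [hs] at h <;>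
                exact hiq (by linarith)
          exact div_pos h1 (by positivity)
        have hbound : ∀ i, ε * |phi e i d'| ≤ σ i * phi e i q := by
          intro i
          by_cases hiP : i ∈ P
          · have hle := Finset.inf'_le
              (fun i => (σ i * phi e i q) / (|phi e i d'| + 1)) hiP
            rw [← hε] at hle
            have hden : (0:ℝ) < |phi e i d'| + 1 := by positivity
            rw [le_div_iff₀ hden] at hle
            nlinarith [hεpos]
          · have hin : phi e i q = 0 := by
              by_contra hne2
              exact hiP (Finset.mem_filter.mpr ⟨Finset.mem_univ _, hne2⟩)
            rw [hd'1 i hin, hin]; simp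
        have hmem : ∀ (sgn : ℝ), sgn = 1 ∨ sgn = -1 → q + (sgn * ε) • d' ∈ K := by
          intro sgn hsgn
          refine ⟨?_, ?_⟩
          · intro i
            rw [phi_add, phi_smul]
            have h1 := hbound i
            have h3 : σ i * (sgn * ε * phi e i d') ≥ -(ε * |phi e i d'|) := by
              have h4 : |σ i * (sgn * ε * phi e i d')| = ε * |phi e i d'| := by
                rw [abs_mul, abs_mul, abs_mul]
                rcases hσ1 i with h | h <;> rcases hsgn with h' | h' <;>
                  rw [h, h'] <;> simp [abs_of_pos hεpos]
              nlinarith [neg_abs_le (σ i * (sgn * ε * phi e i d')), h4]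
            nlinarith [mul_add (σ i) (phi e i q) (sgn * ε * phi e i d')]
          · have heach : ∀ i, α i * (σ i * phi e i (q + (sgn*ε) • d'))
                = α i * (σ i * phi e i q) + (sgn*ε) * (α i * (σ i * phi e i d')) := by
              intro i; rw [phi_add, phi_smul]; ring
            rw [Finset.sum_congr rfl fun i _ => heach i, Finset.sum_add_distrib,
              ← Finset.mul_sum, hqK.2, hd'2, mul_zero, add_zero]
        have hm1 := hmem 1 (Or.inl rfl)
        have hm2 := hmem (-1) (Or.inr rfl)
        have hseg : q ∈ openSegment ℝ (q + ((-1:ℝ) * ε) • d') (q + ((1:ℝ) * ε) • d') := by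
          refine ⟨1/2, 1/2, by norm_num, by norm_num, by norm_num, ?_⟩
          funext j
          simp only [Pi.add_apply, Pi.smul_apply, smul_eq_mul]
          ring
        obtain ⟨hqe1, hqe2⟩ := hqMax _ hm2 _ hm1 hseg
        have hz : ((1:ℝ) * ε) • d' = 0 := by
          have h5 : q + ((1:ℝ) * ε) • d' = q := hqe2
          have := add_eq_left.mp h5
          exact this
        rw [one_mul] at hz
        exact hne ((smul_eq_zero.mp hz).resolve_left hεpos.ne')
      rw [hd'] at hd'0
      exact sub_eq_zero.mp hd'0
    have hqne : q ≠ 0 := by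
      intro h
      have h2 := hqK.2
      rw [h] at h2
      rw [Finset.sum_eq_zero (fun i _ => by rw [phi_zero]; ring)] at h2
      norm_num at h2
    obtain ⟨r, c, hcne, hwc, hr01⟩ := exists_cocircuit e hTU hinj q hqne hkerq
    have main : ∀ (r : Fin g → ℤ) (c : ℝ), 0 < c → q = c • (fun j => (r j : ℝ)) →
        (∀ i, (∑ j, e i j * r j) = 0 ∨ (∑ j, e i j * r j) = 1 ∨ (∑ j, e i j * r j) = -1) →
        0 ≤ fφ q := by
      intro r c hc hqc hr01
      set rr : Fin g → ℝ := fun j => (r j : ℝ) with hrr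
      have hfrr : fφ q = c * fφ rr := by
        have h1 : fφ (c • rr + (0:ℝ) • rr) = c * fφ rr + 0 * fφ rr := hflin c 0 rr rr
        rw [zero_smul, add_zero, zero_mul, add_zero] at h1
        rw [hqc]; exact h1
      have hrr01 : ∀ i, phi e i rr = 0 ∨ phi e i rr = 1 ∨ phi e i rr = -1 := by
        intro i
        have hcast : phi e i rr = ((∑ j, e i j * r j : ℤ) : ℝ) := phi_intCast e i r
        rcases hr01 i with h | h | h
        · left; rw [hcast, h]; norm_num
        · right; left; rw [hcast, h]; norm_num
        · right; right; rw [hcast, h]; norm_num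
      have hsign : ∀ i, 0 ≤ σ i * phi e i rr := by
        intro i
        have h1 := hqK.1 i
        rw [hqc, phi_smul] at h1
        nlinarith [hc]
      have hsq : ∀ i, σ i * phi e i rr = phi e i rr * phi e i rr := by
        intro i
        have h6 := hsign i
        rcases hrr01 i with h | h | h
        · rw [h]; ring
        · rcases hσ1 i with hs | hs
          · norm_num [h, hs]
          · exfalso; rw [h, hs] at h6; norm_num at h6
        · rcases hσ1 i with hs | hs
          · exfalso; rw [h, hs] at h6; norm_num at h6
          · norm_num [h, hs]
      have hfrr2 : 0 ≤ fφ rr := by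
        have hQ : dicingForm α e rr rr = ∑ i, α i * (phi e i rr * phi e i rr) := by
          rw [dicing_eq]; exact Finset.sum_congr rfl fun i _ => by ring
        have hV := hVor r
        have hshow : fφ rr = (1/2) * (∑ i, α i * (σ i * phi e i rr)) - dicingForm α e x rr := by
          rw [hfφ]
        rw [hshow, Finset.sum_congr rfl (fun i _ => by rw [hsq i]), ← hQ]
        have hxrr : dicingForm α e x rr = dicingForm α e x (fun j => (r j : ℝ)) := rfl
        have hrrrr : dicingForm α e rr rr
            = dicingForm α e (fun j => (r j : ℝ)) (fun j => (r j : ℝ)) := rfl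
        rw [hxrr, hrrrr]
        linarith
      rw [hfrr]
      exact mul_nonneg hc.le hfrr2
    rcases lt_or_gt_of_ne hcne with hneg | hposc
    · refine main (fun j => -(r j)) (-c) (by linarith) ?_ ?_
      · rw [hwc]; funext j
        simp only [Pi.smul_apply, smul_eq_mul, Int.cast_neg]
        ring
      · intro i
        have hsum : (∑ j, e i j * (-(r j))) = -(∑ j, e i j * r j) := by
          rw [← Finset.sum_neg_distrib]
          exact Finset.sum_congr rfl fun j _ => by ring
        rcases hr01 i with h | h | h
        · left; rw [hsum, h]; ring
        · right; right; rw [hsum, h]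
        · right; left; rw [hsum, h]; ring
    · exact main r c hposc hwc hr01
  have hKf : ∀ q ∈ K, 0 ≤ fφ q := by
    intro q hqK
    have hKM := closure_convexHull_extremePoints hKcomp hKconv
    rw [← hKM] at hqK
    have hCclosed : IsClosed {q : Fin g → ℝ | 0 ≤ fφ q} := isClosed_le continuous_const hfcont
    have hCconv : Convex ℝ {q : Fin g → ℝ | 0 ≤ fφ q} := by
      intro q1 hq1 q2 hq2 a b ha hb hab
      show (0:ℝ) ≤ fφ (a • q1 + b • q2)
      rw [hflin a b q1 q2]
      have hq1' : (0:ℝ) ≤ fφ q1 := hq1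
      have hq2' : (0:ℝ) ≤ fφ q2 := hq2
      nlinarith [mul_nonneg ha hq1', mul_nonneg hb hq2']
    exact (closure_minimal (convexHull_min hext hCconv) hCclosed) hqK
  have hmemK : s₀⁻¹ • w₀ ∈ K := by
    refine ⟨?_, ?_⟩
    · intro i
      rw [phi_smul]
      have h2 : σ i * (s₀⁻¹ * phi e i w₀) = s₀⁻¹ * |phi e i w₀| := by
        rw [← hσabs i]; ring
      rw [h2]
      positivity
    · have heach : ∀ i, α i * (σ i * phi e i (s₀⁻¹ • w₀)) = s₀⁻¹ * (α i * |phi e i w₀|) := by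
        intro i; rw [phi_smul, ← hσabs i]; ring
      rw [Finset.sum_congr rfl fun i _ => heach i, ← Finset.mul_sum, ← hs₀]
      field_simp
  have h1 := hKf _ hmemK
  have h2 : fφ (s₀⁻¹ • w₀) = s₀⁻¹ * fφ w₀ := by
    have h3 := hflin s₀⁻¹ 0 w₀ w₀
    rw [zero_smul, add_zero, zero_mul, add_zero] at h3
    exact h3
  rw [h2] at h1
  have h3 : 0 ≤ fφ w₀ := by
    by_contra h
    push_neg at h
    have hcon := mul_pos (inv_pos.mpr hs₀pos) (neg_pos.mpr h)
    nlinarith [hcon]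
  have h4 : (∑ i, α i * (σ i * phi e i w₀)) = ∑ i, α i * |phi e i w₀| :=
    Finset.sum_congr rfl fun i _ => by rw [hσabs i]
  have h5 : fφ w₀ = (1/2) * (∑ i, α i * (σ i * phi e i w₀)) - dicingForm α e x w₀ := by
    rw [hfφ]
  rw [h5, h4] at h3
  linarith

end Stmt8Aux

theorem stmt_8 {g m : ℕ} (α : Fin m → ℝ) (hα : ∀ i, 0 < α i)
    (e : Fin m → (Fin g → ℤ)) (hTU : TotallyUnimodular e)
    (hpos : ∀ x : Fin g → ℝ, x ≠ 0 → 0 < dicingForm α e x x)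
    -- `v i` is the vector representing the functional `e i` via `Q`
    (v : Fin m → (Fin g → ℝ))
    (hv : ∀ i (y : Fin g → ℝ), dicingForm α e (v i) y = ∑ j, (e i j : ℝ) * y j) :
    -- the Voronoi cell of the lattice `ℤ^g` equals the zonotope
    -- `Σᵢ [-αᵢvᵢ/2, αᵢvᵢ/2]`
    {x : Fin g → ℝ | ∀ l : Fin g → ℤ,
        dicingForm α e x x ≤
          dicingForm α e (x - fun j => (l j : ℝ)) (x - fun j => (l j : ℝ))}
      =
    {x : Fin g → ℝ | ∃ t : Fin m → ℝ,
        (∀ i, t i ∈ Set.Icc (-(1:ℝ)/2) (1/2)) ∧ x = ∑ i, (t i * α i) • v i} := by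
  classical
  ext x
  simp only [Set.mem_setOf_eq]
  constructor
  · intro hx
    have hVor : ∀ l : Fin g → ℤ, 2 * dicingForm α e x (fun j => (l j : ℝ)) ≤
        dicingForm α e (fun j => (l j : ℝ)) (fun j => (l j : ℝ)) := by
      intro l
      have h1 := hx l
      have h2 := Stmt8Aux.dicing_sub α e x (fun j => (l j : ℝ))
      rw [h2] at h1
      linarith
    have hsupp := Stmt8Aux.support_bound α hα e hTU hpos x hVor
    exact Stmt8Aux.mem_zonotope α e hpos v (fun i y => hv i y) x hsupp
  · rintro ⟨t, ht, hxt⟩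
    intro l
    set L : Fin g → ℝ := fun j => (l j : ℝ) with hL
    have hQxy : ∀ y, dicingForm α e x y = ∑ i, (t i * α i) * Stmt8Aux.phi e i y := by
      intro y
      rw [hxt, Stmt8Aux.dicing_sum_left]
      exact Finset.sum_congr rfl fun i _ => by rw [hv i y]; rfl
    have hsub := Stmt8Aux.dicing_sub α e x L
    have hQLL : dicingForm α e L L
        = ∑ i, α i * (Stmt8Aux.phi e i L * Stmt8Aux.phi e i L) := by
      rw [Stmt8Aux.dicing_eq]; exact Finset.sum_congr rfl fun i _ => by ring
    have hmain : 0 ≤ dicingForm α e L L - 2 * dicingForm α e x L := by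
      rw [hQLL, hQxy L, Finset.mul_sum, ← Finset.sum_sub_distrib]
      apply Finset.sum_nonneg
      intro i _
      have hcast : Stmt8Aux.phi e i L = ((∑ j, e i j * l j : ℤ) : ℝ) :=
        Stmt8Aux.phi_intCast e i l
      set Nn : ℤ := ∑ j, e i j * l j with hNn
      have habsZ : |Nn| ≤ Nn * Nn := by
        rcases eq_or_ne Nn 0 with h | h
        · rw [h]; simp
        · have h1 : 1 ≤ |Nn| := Int.one_le_abs h
          nlinarith [abs_nonneg Nn, sq_abs Nn]
      have habs : |(Nn : ℝ)| ≤ (Nn : ℝ) * (Nn : ℝ) := by exact_mod_cast habsZ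
      have ht1 := (ht i).1
      have ht2 := (ht i).2
      rw [hcast]
      have h5 : 0 ≤ (1/2 - t i) * (|(Nn:ℝ)| + (Nn:ℝ)) := by
        apply mul_nonneg
        · have : -(1:ℝ)/2 ≤ t i := ht1
          linarith [ht2]
        · linarith [neg_abs_le ((Nn:ℝ))]
      have h6 : 0 ≤ (1/2 + t i) * (|(Nn:ℝ)| - (Nn:ℝ)) := by
        apply mul_nonneg
        · have : -(1:ℝ)/2 ≤ t i := ht1
          linarith
        · linarith [le_abs_self ((Nn:ℝ))]
      have h7 : 2 * (t i * (Nn:ℝ)) ≤ |(Nn:ℝ)| := by nlinarith [h5, h6]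
      have h8 : 0 ≤ (Nn:ℝ) * (Nn:ℝ) - 2 * (t i * (Nn:ℝ)) := by linarith
      have h9 : 0 ≤ α i * ((Nn:ℝ) * (Nn:ℝ) - 2 * (t i * (Nn:ℝ))) :=
        mul_nonneg (hα i).le h8
      nlinarith [h9]
    rw [hsub]
    linarith
end
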